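/- arXiv:1611.04907 — 2 statements merged into one kernel-verified Lean document; each statement's English description precedes it below -/
import Mathlib

section
/- Let q ≥ 1. For every θ in the frontier of the invertible region D_θ, the point ζ = B⁻(θ) lies in the closed unit cube [−1,1]^q and has at least one coordinate of absolute value exactly 1; i.e., |ζ_i| = 1 for some i ∈ {1,…,q}. -/
/-- Forward recursion for the Barndorff-Nielsen–Schou / Monahan transformation:
`fwdRow ζ k i = θ_{i,k}` (1-based), with `θ_{k,k} = ζ_k` and
`θ_{i,k} = θ_{i,k-1} - ζ_k * θ_{k-i,k-1}` for `1 ≤ i ≤ k-1`. -/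
noncomputable def fwdRow (ζ : ℕ → ℝ) : ℕ → ℕ → ℝ
  | 0 => fun _ => 0
  | (k+1) => fun i =>
      if i = k + 1 then ζ (k + 1)
      else fwdRow ζ k i - ζ (k + 1) * fwdRow ζ k (k + 1 - i)

open Classical in
/-- Reverse recursion: `(invAux q θ d).1` is row `q - d` (i.e. `θ_{·, q-d}`), and
`(invAux q θ d).2` is the proposition that `|θ_{j,j}| < 1` for all `j` with `q - d ≤ j ≤ q`.
Row `q-(d+1)` is given by `θ_{i,k-1} = (θ_{i,k} + θ_{k,k} θ_{k-i,k})/(1-θ_{k,k}^2)` with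
`k = q - d` when the diagonal condition holds at all levels `≥ k`, and is `0` otherwise. -/
noncomputable def invAux (q : ℕ) (θ : ℕ → ℝ) : ℕ → (ℕ → ℝ) × Prop
  | 0 => (θ, |θ q| < 1)
  | (d+1) =>
      let p := invAux q θ d
      let row : ℕ → ℝ := fun i =>
        if p.2 then (p.1 i + p.1 (q - d) * p.1 (q - d - i)) / (1 - (p.1 (q - d)) ^ 2)
        else 0
      (row, p.2 ∧ |row (q - d - 1)| < 1)

/-- Interpret a vector in `ℝ^q` as a 1-based sequence `ℕ → ℝ` (value `0` out of range). -/
def toSeq {q : ℕ} (v : Fin q → ℝ) : ℕ → ℝ :=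
  fun n => if h : n - 1 < q then v ⟨n - 1, h⟩ else 0

/-- The map `B : ℝ^q → ℝ^q`, `B(ζ)_i = θ_{i,q}`. -/
noncomputable def Bmap {q : ℕ} (ζ : Fin q → ℝ) : Fin q → ℝ :=
  fun i => fwdRow (toSeq ζ) q (i.1 + 1)

/-- The map `B⁻ : ℝ^q → ℝ^q`, `B⁻(θ)_i = θ_{i,i}` computed by the reverse recursion. -/
noncomputable def Binv {q : ℕ} (θ : Fin q → ℝ) : Fin q → ℝ :=
  fun i => (invAux q (toSeq θ) (q - (i.1 + 1))).1 (i.1 + 1)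

/-- The invertible region `D_θ ⊆ ℝ^q`: all complex roots of
`θ(z) = 1 - θ_1 z - ⋯ - θ_q z^q` satisfy `|z| > 1`. -/
def invRegion (q : ℕ) : Set (Fin q → ℝ) :=
  {θ | ∀ z : ℂ, 1 - ∑ i : Fin q, (θ i : ℂ) * z ^ (i.1 + 1) = 0 → 1 < ‖z‖}

/-- The open unit cube `D_ζ = (-1,1)^q ⊆ ℝ^q`. -/
def openCube (q : ℕ) : Set (Fin q → ℝ) :=
  {ζ | ∀ i, ζ i ∈ Set.Ioo (-1 : ℝ) 1}


section AuxProof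
open Finset Polynomial Filter Topology

noncomputable def evalA (a : ℕ → ℝ) (k : ℕ) (z : ℂ) : ℂ :=
  1 - ∑ i ∈ Finset.range k, (a (i+1) : ℂ) * z ^ (i+1)

noncomputable def grev (a : ℕ → ℝ) (k : ℕ) (z : ℂ) : ℂ :=
  z ^ k - ∑ i ∈ Finset.range k, (a (i+1) : ℂ) * z ^ (k - (i+1))

def NoRoot (a : ℕ → ℝ) (k : ℕ) : Prop :=
  ∀ z : ℂ, ‖z‖ ≤ 1 → evalA a k z ≠ 0

lemma norm_mprod (s : Multiset ℂ) : ‖s.prod‖ = (s.map (fun x => ‖x‖)).prod :=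
  Multiset.induction_on s (by simp) (fun a s ih => by simp [ih])

lemma factor_ineq {z r : ℂ} (hz : ‖z‖ ≤ 1) (hr : 1 ≤ ‖r‖) :
    ‖1 - z * r‖ ≤ ‖(starRingEnd ℂ) z - r‖ := by
  have hz2 : Complex.normSq z ≤ 1 := by
    rw [← Complex.sq_norm]; nlinarith [norm_nonneg z]
  have hr2 : 1 ≤ Complex.normSq r := by
    rw [← Complex.sq_norm]; nlinarith [norm_nonneg r]
  have key : Complex.normSq ((starRingEnd ℂ) z - r) - Complex.normSq (1 - z * r)
      = (1 - Complex.normSq z) * (Complex.normSq r - 1) := by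
    simp [Complex.normSq_apply, Complex.sub_re, Complex.sub_im, Complex.mul_re,
      Complex.mul_im, Complex.one_re, Complex.one_im, Complex.conj_re, Complex.conj_im]
    ring
  have h1 : Complex.normSq (1 - z * r) ≤ Complex.normSq ((starRingEnd ℂ) z - r) := by
    nlinarith
  have := Complex.sq_norm (1 - z * r)
  have := Complex.sq_norm ((starRingEnd ℂ) z - r)
  nlinarith [norm_nonneg (1 - z * r), norm_nonneg ((starRingEnd ℂ) z - r)]

lemma prod_abs_le {s : Multiset ℂ} (f g : ℂ → ℝ)
    (hf : ∀ x ∈ s, 0 ≤ f x) (hg : ∀ x ∈ s, 0 ≤ g x)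
    (h : ∀ x ∈ s, f x ≤ g x) :
    (s.map f).prod ≤ (s.map g).prod := by
  induction s using Multiset.induction with
  | empty => simp
  | cons a s ih =>
    simp only [Multiset.map_cons, Multiset.prod_cons]
    have h1 := h a (Multiset.mem_cons_self a s)
    have hfp : (0:ℝ) ≤ (s.map f).prod := by
      apply Multiset.prod_nonneg; intro y hy
      obtain ⟨x, hx, rfl⟩ := Multiset.mem_map.mp hy
      exact hf x (Multiset.mem_cons_of_mem hx)
    have hga : 0 ≤ g a := hg a (Multiset.mem_cons_self a s)
    have hs := ih (fun x hx => hf x (Multiset.mem_cons_of_mem hx))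
      (fun x hx => hg x (Multiset.mem_cons_of_mem hx))
      (fun x hx => h x (Multiset.mem_cons_of_mem hx))
    exact mul_le_mul h1 hs hfp hga

lemma one_le_prod_abs {s : Multiset ℂ} (h : ∀ x ∈ s, 1 ≤ ‖x‖) :
    1 ≤ (s.map (fun x => ‖x‖)).prod := by
  induction s using Multiset.induction with
  | empty => simp
  | cons a s ih =>
    simp only [Multiset.map_cons, Multiset.prod_cons]
    have h1 := h a (Multiset.mem_cons_self a s)
    have hs := ih (fun x hx => h x (Multiset.mem_cons_of_mem hx))
    nlinarith

lemma one_lt_prod_abs {s : Multiset ℂ} (hne : s ≠ 0) (h : ∀ x ∈ s, 1 < ‖x‖) :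
    1 < (s.map (fun x => ‖x‖)).prod := by
  obtain ⟨a, ha⟩ := Multiset.exists_mem_of_ne_zero hne
  obtain ⟨s', rfl⟩ := Multiset.exists_cons_of_mem ha
  simp only [Multiset.map_cons, Multiset.prod_cons]
  have h1 := h a (Multiset.mem_cons_self a s')
  have hs := one_le_prod_abs (fun x hx => (h x (Multiset.mem_cons_of_mem hx)).le)
  nlinarith

lemma key (a : ℕ → ℝ) (k : ℕ) (h : NoRoot a k) :
    (∀ z : ℂ, ‖z‖ ≤ 1 → ‖grev a k z‖ ≤ ‖evalA a k z‖) ∧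
    (1 ≤ k → |a k| < 1) := by
  rcases Nat.eq_zero_or_pos k with rfl | hk
  · exact ⟨fun z hz => by simp [grev, evalA], fun hcon => by omega⟩
  set P : Polynomial ℂ :=
    Polynomial.C 1 - ∑ i ∈ Finset.range k, Polynomial.C ((a (i+1) : ℝ) : ℂ) * Polynomial.X ^ (i+1)
    with hPdef
  have heval : ∀ z : ℂ, P.eval z = evalA a k z := by
    intro z; simp [hPdef, evalA, eval_finset_sum]
  have hA0 : evalA a k 0 = 1 := by simp [evalA]
  have hP0 : P.eval 0 = 1 := by rw [heval]; exact hA0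
  have hPne : P ≠ 0 := by intro hcon; rw [hcon] at hP0; simp at hP0
  set M := P.roots with hM
  set c := P.leadingCoeff with hc
  have hcard : M.card = P.natDegree := IsAlgClosed.card_roots_eq_natDegree
  have hfact : Polynomial.C c * (M.map fun r => X - Polynomial.C r).prod = P :=
    C_leadingCoeff_mul_prod_multiset_X_sub_C hcard
  have hevalprod : ∀ z : ℂ, evalA a k z = c * (M.map fun r => z - r).prod := by
    intro z
    rw [← heval, ← hfact, eval_mul, eval_C, eval_multiset_prod, Multiset.map_map]
    exact congrArg (fun t => c * t) (congrArg Multiset.prod (Multiset.map_congr rfl (fun r _ => by simp)))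
  have hroots : ∀ r ∈ M, 1 < ‖r‖ := by
    intro r hr
    by_contra hle
    push_neg at hle
    exact h r hle (by rw [← heval]; exact isRoot_of_mem_roots hr)
  have hdeg : P.natDegree ≤ k := by
    apply le_trans (natDegree_sub_le _ _)
    rw [max_le_iff]
    constructor
    · simp
    · apply natDegree_sum_le_of_forall_le
      intro i hi
      apply le_trans natDegree_mul_le
      simp only [natDegree_C, natDegree_X_pow, zero_add]
      simp only [Finset.mem_range] at hi
      omega
  have hm : M.card ≤ k := hcard ▸ hdeg
  have habs1 : ‖c‖ * (M.map (fun x => ‖x‖)).prod = 1 := by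
    have h0 := hevalprod 0
    rw [hA0] at h0
    have h1 := congrArg norm h0.symm
    rw [norm_mul, norm_mprod, Multiset.map_map, norm_one] at h1
    rw [← h1]
    exact congrArg (fun t => ‖c‖ * t) (congrArg Multiset.prod (Multiset.map_congr rfl (fun r _ => by simp)))
  have hprodge : 1 ≤ (M.map (fun x => ‖x‖)).prod := one_le_prod_abs (fun x hx => (hroots x hx).le)
  have hcpos : 0 < ‖c‖ := by
    rcases (norm_nonneg c).lt_or_eq with h1 | h1
    · exact h1
    · exfalso; rw [← h1] at habs1; simp at habs1
  have hcoeffk : P.coeff k = -(a k : ℂ) := by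
    rw [hPdef]
    rw [coeff_sub, coeff_C, if_neg (by omega : ¬ k = 0), finset_sum_coeff]
    rw [Finset.sum_eq_single (k-1)]
    · rw [coeff_C_mul, coeff_X_pow, if_pos (by omega : k = (k-1)+1)]
      simp [show k - 1 + 1 = k by omega]
    · intro b hb hbne
      rw [coeff_C_mul, coeff_X_pow, if_neg (by simp at hb; omega)]
      ring
    · intro hcon
      exact absurd (Finset.mem_range.mpr (by omega : k - 1 < k)) hcon
  have hak : |a k| < 1 := by
    by_cases hmk : P.natDegree = k
    · have hck : P.coeff k = c := by rw [← hmk]; rfl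
      have habsc : ‖c‖ = |a k| := by
        rw [← hck, hcoeffk, norm_neg, Complex.norm_real, Real.norm_eq_abs]
      have hMne : M ≠ 0 := by
        intro h0
        rw [h0] at hcard
        simp at hcard
        omega
      have := one_lt_prod_abs hMne hroots
      nlinarith
    · have hlt : P.natDegree < k := lt_of_le_of_ne hdeg hmk
      have h0 : P.coeff k = 0 := coeff_eq_zero_of_natDegree_lt hlt
      rw [h0] at hcoeffk
      have h2 : -(a k : ℂ) = 0 := hcoeffk.symm
      have h3 : (a k : ℂ) = 0 := neg_eq_zero.mp h2
      have : a k = 0 := by exact_mod_cast h3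
      simp [this]
  refine ⟨?_, fun _ => hak⟩
  intro z hz
  rcases eq_or_ne z 0 with rfl | hzne
  · have hg0 : grev a k 0 = -(a k : ℂ) := by
      rw [grev, Finset.sum_eq_single (k-1)]
      · rw [show k - ((k-1)+1) = 0 by omega, show k - 1 + 1 = k by omega]
        simp [zero_pow (by omega : k ≠ 0)]
      · intro b hb hbne
        rw [zero_pow (by simp at hb; omega : ¬ (k - (b+1) = 0))]
        ring
      · intro hcon
        exact absurd (Finset.mem_range.mpr (by omega : k - 1 < k)) hcon
    rw [hg0, hA0, norm_neg, Complex.norm_real, Real.norm_eq_abs, norm_one]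
    exact hak.le
  · set w := (starRingEnd ℂ) z with hw
    have hwne : w ≠ 0 := by simp [hw, hzne]
    have habsw : ‖w‖ = ‖z‖ := Complex.norm_conj z
    have hconj : grev a k w = (starRingEnd ℂ) (grev a k z) := by
      simp [grev, map_sub, map_pow, map_sum, map_mul, Complex.conj_ofReal, hw]
    have hgabs : ‖grev a k z‖ = ‖grev a k w‖ := by
      rw [hconj, Complex.norm_conj]
    have hrec : grev a k w = w ^ k * evalA a k w⁻¹ := by
      rw [grev, evalA, mul_sub, mul_one, Finset.mul_sum]
      congr 1
      apply Finset.sum_congr rfl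
      intro i hi
      simp only [Finset.mem_range] at hi
      have hpow : w ^ k = w ^ (k - (i+1)) * w ^ (i+1) := by
        rw [← pow_add]; congr 1; omega
      rw [hpow]
      have hwi : w ^ (i+1) * w⁻¹ ^ (i+1) = 1 := by rw [← mul_pow, mul_inv_cancel₀ hwne, one_pow]
      linear_combination (-((a (i+1) : ℂ) * w ^ (k - (i+1)))) * hwi
    have hsplit : w ^ k = w ^ (k - M.card) * w ^ M.card := by
      rw [← pow_add]; congr 1; omega
    have hwm : w ^ M.card * (M.map fun r => w⁻¹ - r).prod = (M.map fun r => 1 - w * r).prod := by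
      rw [show w ^ M.card = (M.map fun _ => w).prod by
        rw [Multiset.map_const']; simp [Multiset.prod_replicate]]
      rw [← Multiset.prod_map_mul]
      apply congrArg
      apply Multiset.map_congr rfl
      intro r _
      field_simp
    have hkey : grev a k w = c * (w ^ (k - M.card) * (M.map fun r => 1 - w * r).prod) := by
      rw [hrec, hevalprod, hsplit, ← hwm]
      ring
    have habs_grev : ‖grev a k z‖
        = ‖c‖ * (‖z‖ ^ (k - M.card)
          * (M.map fun r => ‖1 - w * r‖).prod) := by
      rw [hgabs, hkey, norm_mul, norm_mul, norm_pow, habsw, norm_mprod, Multiset.map_map]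
      rfl
    have habs_eval : ‖evalA a k z‖
        = ‖c‖ * (M.map fun r => ‖z - r‖).prod := by
      rw [hevalprod z, norm_mul, norm_mprod, Multiset.map_map]
      rfl
    rw [habs_grev, habs_eval]
    apply mul_le_mul_of_nonneg_left ?_ (norm_nonneg c)
    have h1 : ‖z‖ ^ (k - M.card) ≤ 1 :=
      pow_le_one₀ (norm_nonneg z) hz
    have h2 : (M.map fun r => ‖1 - w * r‖).prod
        ≤ (M.map fun r => ‖z - r‖).prod := by
      apply prod_abs_le
      · intro x _; exact norm_nonneg _
      · intro x _; exact norm_nonneg _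
      · intro x hx
        have := factor_ineq (z := w) (r := x) (by rw [habsw]; exact hz) (hroots x hx).le
        rwa [hw, Complex.conj_conj] at this
    have h3 : (0:ℝ) ≤ (M.map fun r => ‖1 - w * r‖).prod := by
      apply Multiset.prod_nonneg
      intro y hy
      obtain ⟨x, _, rfl⟩ := Multiset.mem_map.mp hy
      exact norm_nonneg _
    calc ‖z‖ ^ (k - M.card) * (M.map fun r => ‖1 - w * r‖).prod
        ≤ 1 * (M.map fun r => ‖z - r‖).prod := by
          apply mul_le_mul h1 h2 h3 zero_le_one
      _ = _ := one_mul _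

lemma diag_lt (a : ℕ → ℝ) (k : ℕ) (hk : 1 ≤ k) (h : NoRoot a k) : |a k| < 1 :=
  (key a k h).2 hk

lemma SCdown (a : ℕ → ℝ) (k : ℕ) (hk : 1 ≤ k) (h : NoRoot a k) (b : ℕ → ℝ)
    (hb : ∀ i, 1 ≤ i → i ≤ k - 1 → b i = (a i + a k * a (k - i)) / (1 - a k ^ 2)) :
    NoRoot b (k - 1) := by
  have hak := diag_lt a k hk h
  have hden : (1:ℝ) - a k ^ 2 ≠ 0 := by
    have := abs_lt.mp hak; nlinarith
  intro z hz
  have hident : ((1:ℝ) - a k ^ 2 : ℂ) * evalA b (k-1) z = evalA a k z + (a k : ℂ) * grev a k z := by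
    rw [evalA, evalA, grev]
    -- split the range-k sums
    have hsplit1 : ∑ i ∈ Finset.range k, (a (i+1) : ℂ) * z ^ (i+1)
        = (∑ i ∈ Finset.range (k-1), (a (i+1) : ℂ) * z ^ (i+1)) + (a k : ℂ) * z ^ k := by
      rw [show k = (k-1)+1 by omega, Finset.sum_range_succ]
      rw [show k - 1 + 1 = k by omega]
    have hsplit2 : ∑ i ∈ Finset.range k, (a (i+1) : ℂ) * z ^ (k - (i+1))
        = (∑ i ∈ Finset.range (k-1), (a (k-1-i) : ℂ) * z ^ (i+1)) + (a k : ℂ) := by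
      rw [show k = (k-1)+1 by omega, Finset.sum_range_succ]
      rw [show k - 1 + 1 = k by omega, show k - k = 0 by omega, pow_zero, mul_one]
      congr 1
      rw [← Finset.sum_range_reflect]
      apply Finset.sum_congr rfl
      intro i hi
      simp only [Finset.mem_range] at hi
      congr 2
      · congr 1; omega
      · omega
    rw [hsplit1, hsplit2]
    rw [mul_sub, Finset.mul_sum]
    have hterm : ∀ i ∈ Finset.range (k-1),
        ((1:ℝ) - a k ^ 2 : ℂ) * ((b (i+1) : ℂ) * z ^ (i+1))
        = ((a (i+1) : ℂ) + (a k : ℂ) * (a (k-1-i) : ℂ)) * z ^ (i+1) := by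
      intro i hi
      simp only [Finset.mem_range] at hi
      rw [hb (i+1) (by omega) (by omega)]
      rw [show k - (i+1) = k - 1 - i by omega]
      have hdc : ((1:ℂ) - (a k : ℂ) ^ 2) ≠ 0 := by
        intro hcon
        apply hden
        have : (((1:ℝ) - a k ^ 2 : ℝ) : ℂ) = 0 := by push_cast; linear_combination hcon
        exact_mod_cast this
      push_cast
      field_simp
    rw [Finset.sum_congr rfl hterm]
    push_cast
    simp only [add_mul, mul_assoc]
    rw [Finset.sum_add_distrib, ← Finset.mul_sum]
    ring
  intro hcon
  rw [hcon, mul_zero] at hident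
  have hAne : evalA a k z ≠ 0 := h z hz
  have hgle := (key a k h).1 z hz
  have habs : ‖(a k : ℂ) * grev a k z‖ < ‖evalA a k z‖ := by
    rw [norm_mul, Complex.norm_real, Real.norm_eq_abs]
    calc |a k| * ‖grev a k z‖ ≤ |a k| * ‖evalA a k z‖ :=
          mul_le_mul_of_nonneg_left hgle (abs_nonneg _)
      _ < 1 * ‖evalA a k z‖ := by
          apply mul_lt_mul_of_pos_right hak
          exact (norm_pos_iff.mpr hAne)
      _ = _ := one_mul _
  have : evalA a k z = - ((a k : ℂ) * grev a k z) := by linear_combination -hident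
  rw [this, norm_neg] at habs
  exact absurd habs (lt_irrefl _)

lemma SCup (a b : ℕ → ℝ) (j : ℕ) (hb : NoRoot b j) (hc : |a (j+1)| < 1)
    (ha : ∀ i, 1 ≤ i → i ≤ j → a i = b i - a (j+1) * b (j+1-i)) :
    NoRoot a (j+1) := by
  intro z hz
  have hident : evalA a (j+1) z = evalA b j z - (a (j+1) : ℂ) * (z * grev b j z) := by
    have hterm : ∀ i ∈ Finset.range j,
        (a (i+1) : ℂ) * z ^ (i+1)
        = ((b (i+1) : ℂ) - (a (j+1) : ℂ) * (b (j-i) : ℂ)) * z ^ (i+1) := by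
      intro i hi
      simp only [Finset.mem_range] at hi
      rw [ha (i+1) (by omega) (by omega)]
      rw [show j + 1 - (i+1) = j - i by omega]
      push_cast
      ring
    have hrefl : ∑ i ∈ Finset.range j, (b (j-i) : ℂ) * z ^ (i+1)
        = ∑ i ∈ Finset.range j, (b (i+1) : ℂ) * z ^ (j-i) := by
      rw [← Finset.sum_range_reflect]
      apply Finset.sum_congr rfl
      intro i hi
      simp only [Finset.mem_range] at hi
      congr 2
      · congr 1; omega
      · omega
    have hzg : z * grev b j z = z ^ (j+1) - ∑ i ∈ Finset.range j, (b (i+1) : ℂ) * z ^ (j-i) := by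
      rw [grev, mul_sub, Finset.mul_sum]
      congr 1
      · ring
      · apply Finset.sum_congr rfl
        intro i hi
        simp only [Finset.mem_range] at hi
        rw [show j - i = (j - (i+1)) + 1 by omega]
        ring
    rw [hzg, evalA, evalA, Finset.sum_range_succ, Finset.sum_congr rfl hterm, ← hrefl]
    push_cast
    simp only [sub_mul, mul_assoc]
    rw [Finset.sum_sub_distrib, ← Finset.mul_sum]
    ring
  have hBne : evalA b j z ≠ 0 := hb z hz
  have hgle := (key b j hb).1 z hz
  have habs : ‖(a (j+1) : ℂ) * (z * grev b j z)‖ < ‖evalA b j z‖ := by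
    rw [norm_mul, norm_mul, Complex.norm_real, Real.norm_eq_abs]
    calc |a (j+1)| * (‖z‖ * ‖grev b j z‖)
        ≤ |a (j+1)| * ‖evalA b j z‖ := by
          apply mul_le_mul_of_nonneg_left ?_ (abs_nonneg _)
          calc ‖z‖ * ‖grev b j z‖
              ≤ 1 * ‖evalA b j z‖ :=
                mul_le_mul hz hgle (norm_nonneg _) zero_le_one
            _ = _ := one_mul _
      _ < 1 * ‖evalA b j z‖ :=
          mul_lt_mul_of_pos_right hc (norm_pos_iff.mpr hBne)
      _ = _ := one_mul _
  intro hcon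
  rw [hcon] at hident
  have : evalA b j z = (a (j+1) : ℂ) * (z * grev b j z) := by linear_combination -hident
  rw [this] at habs
  exact absurd habs (lt_irrefl _)

section recursion
variable (q : ℕ) (σ : ℕ → ℝ)

lemma invAux_zero_fst : (invAux q σ 0).1 = σ := rfl
lemma invAux_zero_snd : (invAux q σ 0).2 ↔ |σ q| < 1 := Iff.rfl

open Classical in
lemma invAux_succ_fst (d i : ℕ) : (invAux q σ (d+1)).1 i =
    if (invAux q σ d).2 then
      ((invAux q σ d).1 i + (invAux q σ d).1 (q - d) * (invAux q σ d).1 (q - d - i))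
        / (1 - ((invAux q σ d).1 (q - d)) ^ 2)
    else 0 := rfl

lemma invAux_succ_snd (d : ℕ) : (invAux q σ (d+1)).2 ↔
    (invAux q σ d).2 ∧ |(invAux q σ (d+1)).1 (q - d - 1)| < 1 := Iff.rfl

lemma cond_of_succ (d : ℕ) : (invAux q σ (d+1)).2 → (invAux q σ d).2 :=
  fun h => ((invAux_succ_snd q σ d).mp h).1

lemma cond_antitone {d e : ℕ} (h : d ≤ e) : (invAux q σ e).2 → (invAux q σ d).2 := by
  induction e with
  | zero => intro hc; rw [Nat.le_zero.mp h]; exact hc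
  | succ e ih =>
    intro hc
    rcases Nat.lt_or_ge d (e+1) with h1 | h1
    · exact ih (by omega) (cond_of_succ q σ e hc)
    · rw [show d = e + 1 by omega]; exact hc

lemma cond_diag (d : ℕ) (h : (invAux q σ d).2) : |(invAux q σ d).1 (q - d)| < 1 := by
  cases d with
  | zero => exact h
  | succ e =>
    have h2 := ((invAux_succ_snd q σ e).mp h).2
    rwa [show q - (e+1) = q - e - 1 by omega]

lemma chain (hq : 1 ≤ q) (h : NoRoot σ q) :
    ∀ d, d + 1 ≤ q → (invAux q σ d).2 ∧ NoRoot ((invAux q σ d).1) (q - d) := by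
  intro d
  induction d with
  | zero =>
    intro _
    exact ⟨diag_lt σ q hq h, h⟩
  | succ e ih =>
    intro hd
    obtain ⟨hc, hnr⟩ := ih (by omega)
    have hk : 1 ≤ q - e := by omega
    have hrow : ∀ i, 1 ≤ i → i ≤ (q - e) - 1 → (invAux q σ (e+1)).1 i
        = ((invAux q σ e).1 i + (invAux q σ e).1 (q-e) * (invAux q σ e).1 ((q-e) - i))
          / (1 - ((invAux q σ e).1 (q-e))^2) := by
      intro i _ _
      rw [invAux_succ_fst, if_pos hc]
    have hnr' : NoRoot ((invAux q σ (e+1)).1) (q - e - 1) :=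
      SCdown _ (q-e) hk hnr _ hrow
    rw [show q - (e+1) = q - e - 1 by omega]
    refine ⟨(invAux_succ_snd q σ e).mpr ⟨hc, ?_⟩, hnr'⟩
    exact diag_lt _ (q - e - 1) (by omega) hnr'

lemma conv (hq : 1 ≤ q) (hc : (invAux q σ (q-1)).2) : NoRoot σ q := by
  have hcall : ∀ d, d ≤ q - 1 → (invAux q σ d).2 := fun d hd => cond_antitone q σ hd hc
  have main : ∀ j, 1 ≤ j → j ≤ q → NoRoot ((invAux q σ (q - j)).1) j := by
    intro j
    induction j with
    | zero => omega
    | succ j ihj =>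
      intro _ hj
      rcases Nat.eq_zero_or_pos j with rfl | hjpos
      · have hd := cond_diag q σ (q-1) (hcall (q-1) le_rfl)
        rw [show q - (q-1) = 1 by omega] at hd
        intro z hz hcon
        rw [evalA, Finset.sum_range_one, pow_one] at hcon
        have h1 : (((invAux q σ (q-1)).1 (0+1) : ℝ) : ℂ) * z = 1 := by
          linear_combination -hcon
        have h2 := congrArg norm h1
        rw [norm_mul, Complex.norm_real, Real.norm_eq_abs, norm_one] at h2
        have h3 := norm_nonneg z
        have h4 := abs_nonneg ((invAux q σ (q-1)).1 (0+1))
        nlinarith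
      · have ih := ihj hjpos (by omega)
        have hd1 : q - j = (q - (j+1)) + 1 := by omega
        set d := q - (j+1) with hdd
        have hcd : (invAux q σ d).2 := hcall d (by omega)
        have hdiag := cond_diag q σ d hcd
        rw [hd1] at ih
        have hqd : q - d = j + 1 := by omega
        rw [hqd] at hdiag
        apply SCup ((invAux q σ d).1) ((invAux q σ (d+1)).1) j ih hdiag
        intro i h1 h2
        set c := (invAux q σ d).1 (j+1) with hcc
        have hc1 : |c| < 1 := hdiag
        have hden : (1:ℝ) - c^2 ≠ 0 := by
          have := abs_lt.mp hc1; nlinarith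
        have e1 : (invAux q σ (d+1)).1 i
            = ((invAux q σ d).1 i + c * (invAux q σ d).1 (j+1-i)) / (1 - c^2) := by
          rw [invAux_succ_fst, if_pos hcd, hqd]
        have e2 : (invAux q σ (d+1)).1 (j+1-i)
            = ((invAux q σ d).1 (j+1-i) + c * (invAux q σ d).1 i) / (1 - c^2) := by
          rw [invAux_succ_fst, if_pos hcd, hqd]
          rw [show j + 1 - (j+1-i) = i by omega]
        rw [e1, e2]
        field_simp
        ring
  have hmain := main q hq le_rfl
  rwa [Nat.sub_self] at hmain

end recursion

lemma invAux_cont (q : ℕ) (σn : ℕ → ℕ → ℝ) (σ : ℕ → ℝ)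
    (hσ : ∀ i, Tendsto (fun n => σn n i) atTop (𝓝 (σ i))) :
    ∀ d, (d = 0 ∨ ∃ e, d = e + 1 ∧ (invAux q σ e).2) →
      (∀ i, Tendsto (fun n => (invAux q (σn n) d).1 i) atTop (𝓝 ((invAux q σ d).1 i))) ∧
      ((invAux q σ d).2 → ∀ᶠ n in atTop, (invAux q (σn n) d).2) := by
  intro d
  induction d with
  | zero =>
    intro _
    refine ⟨fun i => hσ i, fun h => ?_⟩
    exact ((hσ q).abs).eventually_lt_const h
  | succ e ih =>
    rintro (h0 | ⟨e', he', hce⟩)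
    · exact absurd h0 (by omega)
    have he2 : e' = e := by omega
    rw [he2] at hce
    clear he' he2
    have hprev : (e = 0 ∨ ∃ f, e = f + 1 ∧ (invAux q σ f).2) := by
      cases e with
      | zero => left; rfl
      | succ f => right; exact ⟨f, rfl, cond_of_succ q σ f hce⟩
    obtain ⟨hrows, hconds⟩ := ih hprev
    have hev : ∀ᶠ n in atTop, (invAux q (σn n) e).2 := hconds hce
    have hdiag := cond_diag q σ e hce
    have hden_ne : (1:ℝ) - ((invAux q σ e).1 (q-e))^2 ≠ 0 := by
      have := abs_lt.mp hdiag; nlinarith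
    have hrowconv : ∀ i, Tendsto (fun n => (invAux q (σn n) (e+1)).1 i) atTop
        (𝓝 ((invAux q σ (e+1)).1 i)) := by
      intro i
      have hform : Tendsto (fun n =>
          ((invAux q (σn n) e).1 i + (invAux q (σn n) e).1 (q-e) * (invAux q (σn n) e).1 (q-e-i))
            / (1 - ((invAux q (σn n) e).1 (q-e))^2)) atTop
          (𝓝 (((invAux q σ e).1 i + (invAux q σ e).1 (q-e) * (invAux q σ e).1 (q-e-i))
            / (1 - ((invAux q σ e).1 (q-e))^2))) := by
        apply Tendsto.div
        · exact (hrows i).add ((hrows (q-e)).mul (hrows (q-e-i)))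
        · exact tendsto_const_nhds.sub ((hrows (q-e)).pow 2)
        · exact hden_ne
      rw [invAux_succ_fst, if_pos hce]
      apply Tendsto.congr' ?_ hform
      filter_upwards [hev] with n hn
      rw [invAux_succ_fst, if_pos hn]
    refine ⟨hrowconv, ?_⟩
    intro hc1
    have hlt := ((invAux_succ_snd q σ e).mp hc1).2
    have hev2 : ∀ᶠ n in atTop, |(invAux q (σn n) (e+1)).1 (q-e-1)| < 1 :=
      ((hrowconv (q-e-1)).abs).eventually_lt_const hlt
    filter_upwards [hev, hev2] with n h1 h2
    exact (invAux_succ_snd q (σn n) e).mpr ⟨h1, h2⟩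

lemma mem_invRegion_iff {q : ℕ} (θ : Fin q → ℝ) : θ ∈ invRegion q ↔ NoRoot (toSeq θ) q := by
  have hsum : ∀ z : ℂ, (1:ℂ) - ∑ i : Fin q, (θ i : ℂ) * z ^ (i.1 + 1) = evalA (toSeq θ) q z := by
    intro z
    rw [evalA]
    congr 1
    rw [← Fin.sum_univ_eq_sum_range (fun j => ((toSeq θ (j+1) : ℝ) : ℂ) * z ^ (j+1)) q]
    apply Finset.sum_congr rfl
    intro i _
    congr 2
    simp [toSeq]
  constructor
  · intro h z hz hcon
    rw [← hsum] at hcon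
    exact absurd (h z hcon) (not_lt.mpr hz)
  · intro h z hcon
    by_contra hle
    push_neg at hle
    exact h z hle (by rw [← hsum]; exact hcon)

lemma isOpen_invRegion (q : ℕ) : IsOpen (invRegion q) := by
  rw [Metric.isOpen_iff]
  intro θ hθ
  set g : ℂ → ℝ := fun z => ‖1 - ∑ i : Fin q, (θ i : ℂ) * z ^ (i.1+1)‖ with hg
  have hgc : Continuous g := by
    apply continuous_norm.comp
    continuity
  have hK : IsCompact (Metric.closedBall (0:ℂ) 1) := isCompact_closedBall _ _
  have hne : (Metric.closedBall (0:ℂ) 1).Nonempty := ⟨0, by simp⟩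
  obtain ⟨z0, hz0K, hz0min'⟩ := hK.exists_isMinOn hne hgc.continuousOn
  have hz0min : ∀ z ∈ Metric.closedBall (0:ℂ) 1, g z0 ≤ g z := fun z hzz => hz0min' hzz
  have hm : 0 < g z0 := by
    rcases (norm_nonneg (1 - ∑ i : Fin q, (θ i : ℂ) * z0 ^ (i.1+1))).lt_or_eq with h | h
    · exact h
    · exfalso
      have hz0 : (1:ℂ) - ∑ i : Fin q, (θ i : ℂ) * z0 ^ (i.1+1) = 0 := by
        rw [← norm_eq_zero]; exact h.symm
      have := hθ z0 hz0
      have h2 : ‖z0‖ ≤ 1 := by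
        have := Metric.mem_closedBall.mp hz0K
        rwa [Complex.dist_eq, sub_zero] at this
      linarith
  refine ⟨g z0 / (q+1), by positivity, ?_⟩
  intro θ' hθ'
  intro z hz
  by_contra hle
  push_neg at hle
  have hzK : z ∈ Metric.closedBall (0:ℂ) 1 := by
    rw [Metric.mem_closedBall, Complex.dist_eq, sub_zero]; exact hle
  have hmin := hz0min z hzK
  have hcoord : ∀ i : Fin q, |θ i - θ' i| ≤ dist θ' θ := by
    intro i
    have := dist_le_pi_dist θ' θ i
    rw [Real.dist_eq] at this
    rw [abs_sub_comm]
    exact this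
  have hdist : dist θ' θ < g z0 / (q+1) := Metric.mem_ball.mp hθ'
  have hdiff : ‖(1 - ∑ i : Fin q, (θ i : ℂ) * z ^ (i.1+1))
      - (1 - ∑ i : Fin q, (θ' i : ℂ) * z ^ (i.1+1))‖ ≤ q * (g z0 / (q+1)) := by
    have heq : (1 - ∑ i : Fin q, (θ i : ℂ) * z ^ (i.1+1))
        - (1 - ∑ i : Fin q, (θ' i : ℂ) * z ^ (i.1+1))
        = ∑ i : Fin q, (((θ' i - θ i : ℝ)) : ℂ) * z ^ (i.1+1) := by
      have hs : ∑ i : Fin q, (((θ' i : ℂ) - (θ i : ℂ)) * z ^ (i.1+1))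
          = (∑ i : Fin q, (θ' i : ℂ) * z ^ (i.1+1)) - ∑ i : Fin q, (θ i : ℂ) * z ^ (i.1+1) := by
        rw [← Finset.sum_sub_distrib]
        apply Finset.sum_congr rfl
        intro i _
        ring
      push_cast
      rw [hs]
      ring
    rw [heq]
    calc ‖∑ i : Fin q, (((θ' i - θ i : ℝ)) : ℂ) * z ^ (i.1+1)‖
        ≤ ∑ i : Fin q, ‖(((θ' i - θ i : ℝ)) : ℂ) * z ^ (i.1+1)‖ :=
          norm_sum_le _ _
      _ ≤ ∑ _i : Fin q, g z0 / (q+1) := by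
          apply Finset.sum_le_sum
          intro i _
          rw [norm_mul, Complex.norm_real, Real.norm_eq_abs, norm_pow]
          calc |θ' i - θ i| * ‖z‖ ^ (i.1+1)
              ≤ |θ' i - θ i| * 1 := by
                apply mul_le_mul_of_nonneg_left ?_ (abs_nonneg _)
                exact pow_le_one₀ (norm_nonneg z) hle
            _ = |θ' i - θ i| := mul_one _
            _ ≤ dist θ' θ := by rw [abs_sub_comm]; exact hcoord i
            _ ≤ g z0 / (q+1) := hdist.le
      _ = q * (g z0 / (q+1)) := by
          rw [Finset.sum_const, Finset.card_univ, Fintype.card_fin, nsmul_eq_mul]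
  have hz' : (1:ℂ) - ∑ i : Fin q, (θ' i : ℂ) * z ^ (i.1+1) = 0 := hz
  have hgz : g z ≤ q * (g z0 / (q+1)) := by
    have : (1 - ∑ i : Fin q, (θ i : ℂ) * z ^ (i.1+1))
        = (1 - ∑ i : Fin q, (θ i : ℂ) * z ^ (i.1+1))
          - (1 - ∑ i : Fin q, (θ' i : ℂ) * z ^ (i.1+1)) := by
      rw [hz']; ring
    rw [hg]
    simp only []
    rw [this]
    exact hdiff
  have hq1 : q * (g z0 / (q+1)) < g z0 := by
    have h3 : 0 < g z0 / ((q:ℝ)+1) := by positivity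
    calc (q:ℝ) * (g z0/(q+1)) < ((q:ℝ)+1) * (g z0/(q+1)) := by nlinarith
      _ = g z0 := by field_simp
  linarith

end AuxProof

open Finset Polynomial Filter Topology

/-- For `q ≥ 1` and `θ` on the frontier of the invertible region, `ζ = B⁻(θ)` lies in the
closed unit cube `[-1,1]^q` and some coordinate has absolute value exactly `1`. -/
theorem Binv_of_frontier {q : ℕ} (hq : 1 ≤ q) (θ : Fin q → ℝ)
    (hθ : θ ∈ frontier (invRegion q)) :
    (∀ i, |Binv θ i| ≤ 1) ∧ ∃ i, |Binv θ i| = 1 := by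
  classical
  have hopen := isOpen_invRegion q
  have hcl : θ ∈ closure (invRegion q) := hθ.1
  have hnot : θ ∉ invRegion q := by
    intro hmem
    exact hθ.2 (by rwa [hopen.interior_eq])
  set σ : ℕ → ℝ := toSeq θ with hσdef
  by_cases hC : (invAux q σ (q-1)).2
  · exact absurd ((mem_invRegion_iff θ).mpr (conv q σ hq hC)) hnot
  obtain ⟨u, hu_mem, hu_tend⟩ := mem_closure_iff_seq_limit.mp hcl
  have hucoord : ∀ j : Fin q, Tendsto (fun n => u n j) atTop (𝓝 (θ j)) :=
    fun j => tendsto_pi_nhds.mp hu_tend j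
  set σn : ℕ → ℕ → ℝ := fun n => toSeq (u n) with hσn
  have hσconv : ∀ i, Tendsto (fun n => σn n i) atTop (𝓝 (σ i)) := by
    intro i
    by_cases hi : i - 1 < q
    · have h1 : (fun n => σn n i) = fun n => u n ⟨i-1, hi⟩ := by
        funext n; simp [hσn, toSeq, hi]
      rw [h1, hσdef]
      have h2 : toSeq θ i = θ ⟨i-1, hi⟩ := by simp [toSeq, hi]
      rw [h2]
      exact hucoord ⟨i-1, hi⟩
    · have h1 : (fun n => σn n i) = fun _ => 0 := by
        funext n; simp [hσn, toSeq, hi]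
      have h2 : σ i = 0 := by rw [hσdef]; simp [toSeq, hi]
      rw [h1, h2]
      exact tendsto_const_nhds
  have hNR : ∀ n, NoRoot (σn n) q := fun n => (mem_invRegion_iff (u n)).mp (hu_mem n)
  have hchainn : ∀ n d, d + 1 ≤ q → (invAux q (σn n) d).2 :=
    fun n d hd => (chain q (σn n) hq (hNR n) d hd).1
  have hex : ∃ d, ¬ (invAux q σ d).2 := ⟨q-1, hC⟩
  set D := Nat.find hex with hD
  have hDfail : ¬ (invAux q σ D).2 := Nat.find_spec hex
  have hDmin : ∀ e, e < D → (invAux q σ e).2 := fun e he => not_not.mp (Nat.find_min hex he)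
  have hDle : D ≤ q - 1 := Nat.find_min' hex hC
  have hprior : D = 0 ∨ ∃ e, D = e + 1 ∧ (invAux q σ e).2 := by
    rcases Nat.eq_zero_or_pos D with h0 | hpos
    · exact Or.inl h0
    · exact Or.inr ⟨D - 1, by omega, hDmin (D-1) (by omega)⟩
  have hcont := invAux_cont q σn σ hσconv D hprior
  have hdiag_tend : Tendsto (fun n => (invAux q (σn n) D).1 (q - D)) atTop
      (𝓝 ((invAux q σ D).1 (q - D))) := hcont.1 (q - D)
  have hdiag_lt : ∀ n, |(invAux q (σn n) D).1 (q - D)| < 1 :=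
    fun n => cond_diag q (σn n) D (hchainn n D (by omega))
  have hdiag_le : |(invAux q σ D).1 (q - D)| ≤ 1 :=
    le_of_tendsto hdiag_tend.abs (Filter.Eventually.of_forall (fun n => (hdiag_lt n).le))
  have hdiag_ge : 1 ≤ |(invAux q σ D).1 (q - D)| := by
    by_contra hlt
    push_neg at hlt
    apply hDfail
    rcases hprior with h0 | ⟨e, he, hce⟩
    · rw [h0]; rw [h0] at hlt; exact hlt
    · rw [he]; rw [he] at hlt
      refine (invAux_succ_snd q σ e).mpr ⟨hce, ?_⟩
      rwa [show q - (e+1) = q - e - 1 by omega] at hlt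
  have hdiag_eq : |(invAux q σ D).1 (q - D)| = 1 := le_antisymm hdiag_le hdiag_ge
  constructor
  · intro i
    have hi1 : i.1 + 1 ≤ q := i.2
    rcases lt_trichotomy (q - (i.1 + 1)) D with hlt | heq | hgt
    · have hcd := hDmin _ hlt
      have hh := cond_diag q σ (q - (i.1+1)) hcd
      rw [show q - (q - (i.1+1)) = i.1 + 1 by omega] at hh
      simp only [Binv]
      exact hh.le
    · simp only [Binv]
      have hiq : i.1 + 1 = q - D := by omega
      rw [heq, hiq]
      exact hdiag_eq.le
    · have hfail : ¬ (invAux q σ (q - (i.1+1) - 1)).2 := by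
        intro hcon
        exact hDfail (cond_antitone q σ (by omega : D ≤ q - (i.1+1) - 1) hcon)
      simp only [Binv]
      rw [show q - (i.1+1) = (q - (i.1+1) - 1) + 1 by omega, invAux_succ_fst, if_neg hfail]
      simp
  · have hidx : q - D - 1 < q := by
      rw [Nat.sub_sub]; exact Nat.sub_lt hq (Nat.succ_pos D)
    have hDlt : D < q := lt_of_le_of_lt hDle (Nat.sub_lt hq Nat.one_pos)
    have e1 : q - D - 1 + 1 = q - D := Nat.succ_pred_eq_of_pos (tsub_pos_of_lt hDlt)
    have e2 : q - (q - D) = D := Nat.sub_sub_self hDlt.le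
    refine ⟨⟨q - D - 1, hidx⟩, ?_⟩
    simp only [Binv]
    rw [e1, e2]
    exact hdiag_eq
end

section
/- For q = 4, for all ζ_1 ∈ ℝ and all ζ_3, ζ_4 ∈ (−1,1), one has B⁻(−ζ_3(1 + ζ_4), 1 − ζ_4, ζ_3(1 + ζ_4), ζ_4) = (0, 1, ζ_3, ζ_4); in particular B⁻(B(ζ_1, 1, ζ_3, ζ_4)) = (0, 1, ζ_3, ζ_4) regardless of ζ_1. -/
/-- For `q = 4`, all `ζ₁ ∈ ℝ` and all `ζ₃, ζ₄ ∈ (-1,1)`: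
`B⁻(-ζ₃(1+ζ₄), 1-ζ₄, ζ₃(1+ζ₄), ζ₄) = (0, 1, ζ₃, ζ₄)`; in particular
`B⁻(B(ζ₁, 1, ζ₃, ζ₄)) = (0, 1, ζ₃, ζ₄)` regardless of `ζ₁`. -/
theorem Binv_four (ζ1 : ℝ) (ζ3 ζ4 : ℝ)
    (h3 : ζ3 ∈ Set.Ioo (-1 : ℝ) 1) (h4 : ζ4 ∈ Set.Ioo (-1 : ℝ) 1) :
    Binv ![-ζ3 * (1 + ζ4), 1 - ζ4, ζ3 * (1 + ζ4), ζ4] = ![(0 : ℝ), 1, ζ3, ζ4] ∧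
    Binv (Bmap ![ζ1, (1 : ℝ), ζ3, ζ4]) = ![(0 : ℝ), 1, ζ3, ζ4] := by
  classical
  have habs3 : |ζ3| < 1 := abs_lt.mpr ⟨h3.1, h3.2⟩
  have habs4 : |ζ4| < 1 := abs_lt.mpr ⟨h4.1, h4.2⟩
  have hd4 : (1 : ℝ) - ζ4 ^ 2 ≠ 0 := by nlinarith [sq_abs ζ4, abs_nonneg ζ4]
  have hd3 : (1 : ℝ) - ζ3 ^ 2 ≠ 0 := by nlinarith [sq_abs ζ3, abs_nonneg ζ3]
  have hB : Bmap ![ζ1, (1 : ℝ), ζ3, ζ4] = ![-ζ3 * (1 + ζ4), 1 - ζ4, ζ3 * (1 + ζ4), ζ4] := by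
    funext i
    fin_cases i <;> norm_num [Bmap, fwdRow, toSeq] <;> ring
  have hmain : Binv ![-ζ3 * (1 + ζ4), 1 - ζ4, ζ3 * (1 + ζ4), ζ4] = ![(0 : ℝ), 1, ζ3, ζ4] := by
    set θ : ℕ → ℝ := toSeq ![-ζ3 * (1 + ζ4), 1 - ζ4, ζ3 * (1 + ζ4), ζ4] with hθ
    have hθ1 : θ 1 = -ζ3 * (1 + ζ4) := by norm_num [hθ, toSeq]
    have hθ2 : θ 2 = 1 - ζ4 := by norm_num [hθ, toSeq]
    have hθ3 : θ 3 = ζ3 * (1 + ζ4) := by norm_num [hθ, toSeq]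
    have hθ4 : θ 4 = ζ4 := by norm_num [hθ, toSeq]
    -- level 0
    have hP0 : (invAux 4 θ 0).2 := by
      show |θ 4| < 1
      rw [hθ4]; exact habs4
    -- level 1
    have hr1 : ∀ i, (invAux 4 θ 1).1 i =
        if (invAux 4 θ 0).2 then (θ i + θ 4 * θ (4 - i)) / (1 - θ 4 ^ 2) else 0 :=
      fun _ => rfl
    have hv11 : (invAux 4 θ 1).1 1 = -ζ3 := by
      rw [hr1, if_pos hP0]; norm_num [hθ1, hθ3, hθ4]; field_simp; ring
    have hv12 : (invAux 4 θ 1).1 2 = 1 := by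
      rw [hr1, if_pos hP0]; norm_num [hθ2, hθ4]; field_simp; ring
    have hv13 : (invAux 4 θ 1).1 3 = ζ3 := by
      rw [hr1, if_pos hP0]; norm_num [hθ1, hθ3, hθ4]; field_simp; ring
    have hP1 : (invAux 4 θ 1).2 := by
      show (invAux 4 θ 0).2 ∧ |(invAux 4 θ 1).1 3| < 1
      exact ⟨hP0, by rw [hv13]; exact habs3⟩
    -- level 2
    have hr2 : ∀ i, (invAux 4 θ 2).1 i =
        if (invAux 4 θ 1).2 then
          ((invAux 4 θ 1).1 i + (invAux 4 θ 1).1 3 * (invAux 4 θ 1).1 (3 - i)) /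
            (1 - ((invAux 4 θ 1).1 3) ^ 2)
        else 0 := fun _ => rfl
    have hv22 : (invAux 4 θ 2).1 2 = 1 := by
      rw [hr2, if_pos hP1]; norm_num [hv12, hv11, hv13]; field_simp; ring
    have hP2 : ¬ (invAux 4 θ 2).2 := by
      intro h
      have h2 : |(invAux 4 θ 2).1 2| < 1 := h.2
      rw [hv22] at h2
      norm_num at h2
    -- level 3
    have hv31 : (invAux 4 θ 3).1 1 = 0 := by
      show (if (invAux 4 θ 2).2 then
          ((invAux 4 θ 2).1 1 + (invAux 4 θ 2).1 2 * (invAux 4 θ 2).1 1) /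
            (1 - ((invAux 4 θ 2).1 2) ^ 2)
        else 0) = 0
      rw [if_neg hP2]
    funext i
    fin_cases i
    · exact hv31
    · exact hv22
    · exact hv13
    · exact hθ4
  exact ⟨hmain, by rw [hB]; exact hmain⟩
end
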